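/- Let K be a field and A a 2×2 matrix over K with entries a, b, c, d (so b is the (1,2) entry), and assume b ≠ 0. Write b_{k+1} for the (1,2) entry of the matrix power A^{k+1}. Then for every integer k ≥ 0, b_{k+1}/b = tr(Sym^k A). -/

import Mathlib

open MvPolynomial Finset

set_option maxHeartbeats 3000000
set_option synthInstance.maxHeartbeats 400000

/-- The endomorphism induced by the matrix `A` on the space of homogeneous polynomials of
degree `k` in `n` variables (a model for the `k`-th symmetric power of `K^n`). -/
noncomputable def symPowMap {K : Type*} [Field K] {n : ℕ} (A : Matrix (Fin n) (Fin n) K) (k : ℕ) :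
    homogeneousSubmodule (Fin n) K k →ₗ[K] homogeneousSubmodule (Fin n) K k :=
  LinearMap.restrict
    (MvPolynomial.aeval fun i => ∑ j, A i j • X j :
      MvPolynomial (Fin n) K →ₐ[K] MvPolynomial (Fin n) K).toLinearMap
    (fun p hp => by
      rw [mem_homogeneousSubmodule] at hp ⊢
      have hg : ∀ i : Fin n, (∑ j, A i j • X j : MvPolynomial (Fin n) K).IsHomogeneous 1 := by
        intro i
        apply IsHomogeneous.sum
        intro j _
        rw [smul_eq_C_mul]
        exact (isHomogeneous_X K j).C_mul (A i j)
      have := hp.aeval (fun i => ∑ j, A i j • X j) hg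
      simpa using this)

/-- `trSymPow A k = tr(Sym^k A)`, the trace of the `k`-th symmetric power of `A`. -/
noncomputable def trSymPow {K : Type*} [Field K] {n : ℕ} (A : Matrix (Fin n) (Fin n) K)
    (k : ℕ) : K :=
  LinearMap.trace K _ (symPowMap A k)

/-- `tr(Sym^k A)` for an integer index, with the convention `tr(Sym^k A) = 0` for `k < 0`. -/
noncomputable def trSymPowZ {K : Type*} [Field K] {n : ℕ} (A : Matrix (Fin n) (Fin n) K)
    (k : ℤ) : K :=
  if 0 ≤ k then trSymPow A k.toNat else 0

namespace SymPowAux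

variable {K : Type*} [Field K]

/-! ### Division by a variable, as a linear map -/

/-- Division by the variable `X i`, as a linear map. -/
noncomputable def dv (i : Fin 2) : MvPolynomial (Fin 2) K →ₗ[K] MvPolynomial (Fin 2) K where
  toFun p := p.divMonomial (Finsupp.single i 1)
  map_add' x y := add_divMonomial x y _
  map_smul' c x := by
    simp only [RingHom.id_apply]
    apply MvPolynomial.ext
    intro d
    rw [coeff_divMonomial, coeff_smul, coeff_smul, coeff_divMonomial]

lemma dv_apply (i : Fin 2) (p : MvPolynomial (Fin 2) K) :
    dv i p = p.divMonomial (Finsupp.single i 1) := rfl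

lemma coeff_dv (i : Fin 2) (d : Fin 2 →₀ ℕ) (p : MvPolynomial (Fin 2) K) :
    coeff d (dv i p) = coeff (Finsupp.single i 1 + d) p := rfl

@[simp] lemma dv_X_mul (i : Fin 2) (p : MvPolynomial (Fin 2) K) :
    dv i (X i * p) = p := X_mul_divMonomial i p

lemma dv_X_mul_ne {i j : Fin 2} (h : j ≠ i) (p : MvPolynomial (Fin 2) K) :
    dv i (X j * p) = X j * dv i p := by
  apply MvPolynomial.ext
  intro d
  rw [coeff_dv, coeff_X_mul', coeff_X_mul']
  have hji : (Finsupp.single i 1 + d : Fin 2 →₀ ℕ) j = d j := by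
    rw [Finsupp.add_apply, Finsupp.single_apply, if_neg (Ne.symm h : ¬ i = j), zero_add]
  by_cases hd : j ∈ d.support
  · have hd' : j ∈ (Finsupp.single i 1 + d).support := by
      rw [Finsupp.mem_support_iff] at hd ⊢
      rwa [hji]
    rw [if_pos hd', if_pos hd, coeff_dv]
    congr 1
    rw [Finsupp.mem_support_iff] at hd
    rw [add_tsub_assoc_of_le (Finsupp.single_le_iff.2 (Nat.one_le_iff_ne_zero.2 hd))]
  · have hd' : j ∉ (Finsupp.single i 1 + d).support := by
      rw [Finsupp.mem_support_iff] at hd ⊢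
      rw [hji]
      simpa using hd
    rw [if_neg hd', if_neg hd]

lemma weight_single_one (i : Fin 2) : (Finsupp.weight 1) (Finsupp.single i (1 : ℕ)) = 1 := by
  rw [Finsupp.weight_apply, Finsupp.sum_single_index] <;> simp

lemma isHomogeneous_dv {k : ℕ} (i : Fin 2) {p : MvPolynomial (Fin 2) K}
    (hp : p.IsHomogeneous (k + 1)) : (dv i p).IsHomogeneous k := by
  intro d hd
  rw [coeff_dv] at hd
  have h2 := hp hd
  rw [map_add, weight_single_one] at h2
  omega

lemma dv_eq_zero_of_isHomogeneous_zero {p : MvPolynomial (Fin 2) K} (i : Fin 2)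
    (hp : p.IsHomogeneous 0) : dv i p = 0 := by
  apply MvPolynomial.ext
  intro d
  rw [coeff_dv, coeff_zero]
  by_contra h
  have h2 := hp h
  rw [map_add, weight_single_one] at h2
  omega

/-- Key identity: reconstruction of a homogeneous polynomial of positive degree from its
divisions by the two variables. -/
lemma key1 {m : ℕ} {s : MvPolynomial (Fin 2) K} (hs : s.IsHomogeneous (m + 1)) :
    X 0 * dv 0 s + X 1 * dv 1 (s - X 0 * dv 0 s) = s := by
  have hmod : s - X 0 * dv 0 s = s.modMonomial (Finsupp.single 0 1) := by
    have h0 := divMonomial_add_modMonomial_single s 0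
    rw [dv_apply]
    linear_combination -h0
  rw [hmod]
  have hzero : (s.modMonomial (Finsupp.single 0 1)).modMonomial (Finsupp.single 1 1) = 0 := by
    apply MvPolynomial.ext
    intro d
    rw [coeff_zero]
    by_cases h1 : Finsupp.single (1 : Fin 2) 1 ≤ d
    · rw [coeff_modMonomial_of_le _ h1]
    · rw [coeff_modMonomial_of_not_le _ h1]
      by_cases h0 : Finsupp.single (0 : Fin 2) 1 ≤ d
      · rw [coeff_modMonomial_of_le _ h0]
      · rw [coeff_modMonomial_of_not_le _ h0]
        have hd : d = 0 := by
          rw [Finsupp.single_le_iff] at h0 h1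
          ext x
          fin_cases x <;> simp <;> omega
        subst hd
        apply hs.coeff_eq_zero
        simp [map_zero]
  have h3 := divMonomial_add_modMonomial_single (s.modMonomial (Finsupp.single 0 1)) 1
  rw [hzero, add_zero] at h3
  simp only [dv_apply]
  rw [h3]
  exact divMonomial_add_modMonomial_single s 0

/-! ### Bundled maps between homogeneous components -/

/-- Multiplication by `X i`, as a map between homogeneous components. -/
noncomputable def mb (i : Fin 2) (k : ℕ) :
    homogeneousSubmodule (Fin 2) K k →ₗ[K] homogeneousSubmodule (Fin 2) K (k + 1) :=
  (LinearMap.mulLeft K (X i)).restrict fun p hp => by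
    rw [mem_homogeneousSubmodule] at hp ⊢
    simpa [add_comm] using (isHomogeneous_X K i).mul hp

/-- Division by `X i`, as a map between homogeneous components. -/
noncomputable def db (i : Fin 2) (k : ℕ) :
    homogeneousSubmodule (Fin 2) K (k + 1) →ₗ[K] homogeneousSubmodule (Fin 2) K k :=
  (dv i).restrict fun p hp => by
    rw [mem_homogeneousSubmodule] at hp ⊢
    exact isHomogeneous_dv i hp

@[simp] lemma coe_mb (i : Fin 2) (k : ℕ) (x : homogeneousSubmodule (Fin 2) K k) :
    (mb i k x : MvPolynomial (Fin 2) K) = X i * (x : MvPolynomial (Fin 2) K) := rfl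

@[simp] lemma coe_db (i : Fin 2) (k : ℕ) (x : homogeneousSubmodule (Fin 2) K (k + 1)) :
    (db i k x : MvPolynomial (Fin 2) K) = dv i (x : MvPolynomial (Fin 2) K) := rfl

@[simp] lemma coe_symPowMap {n k : ℕ} (A : Matrix (Fin n) (Fin n) K)
    (x : homogeneousSubmodule (Fin n) K k) :
    (symPowMap A k x : MvPolynomial (Fin n) K) =
      aeval (fun i => ∑ j, A i j • X j) (x : MvPolynomial (Fin n) K) := rfl

/-- The map `(p, q) ↦ X 0 * p + X 1 * q`. -/
noncomputable def Phi (m : ℕ) :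
    homogeneousSubmodule (Fin 2) K m × homogeneousSubmodule (Fin 2) K m →ₗ[K]
      homogeneousSubmodule (Fin 2) K (m + 1) :=
  LinearMap.coprod (mb 0 m) (mb 1 m)

/-- A section of `Phi`. -/
noncomputable def sig (m : ℕ) :
    homogeneousSubmodule (Fin 2) K (m + 1) →ₗ[K]
      homogeneousSubmodule (Fin 2) K m × homogeneousSubmodule (Fin 2) K m :=
  LinearMap.prod (db 0 m) (db 1 m ∘ₗ (LinearMap.id - mb 0 m ∘ₗ db 0 m))

/-- The map `r ↦ (X 1 * r, -(X 0 * r))`. -/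
noncomputable def iot (k : ℕ) :
    homogeneousSubmodule (Fin 2) K k →ₗ[K]
      homogeneousSubmodule (Fin 2) K (k + 1) × homogeneousSubmodule (Fin 2) K (k + 1) :=
  LinearMap.prod (mb 1 k) (-(mb (K := K) 0 k))

/-- A retraction of `iot`. -/
noncomputable def rho (k : ℕ) :
    homogeneousSubmodule (Fin 2) K (k + 1) × homogeneousSubmodule (Fin 2) K (k + 1) →ₗ[K]
      homogeneousSubmodule (Fin 2) K k :=
  db 1 k ∘ₗ (LinearMap.fst K _ _ - db 0 (k + 1) ∘ₗ Phi (k + 1))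

variable (A : Matrix (Fin 2) (Fin 2) K)

/-- The endomorphism of `V_m × V_m` corresponding to `A ⊗ Sym^m A`. -/
noncomputable def TT (m : ℕ) :
    homogeneousSubmodule (Fin 2) K m × homogeneousSubmodule (Fin 2) K m →ₗ[K]
      homogeneousSubmodule (Fin 2) K m × homogeneousSubmodule (Fin 2) K m :=
  (A 0 0 • symPowMap A m).prodMap (A 1 1 • symPowMap A m)
    + LinearMap.inl K _ _ ∘ₗ (A 1 0 • symPowMap A m) ∘ₗ LinearMap.snd K _ _
    + LinearMap.inr K _ _ ∘ₗ (A 0 1 • symPowMap A m) ∘ₗ LinearMap.fst K _ _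

/-! ### The intertwining identities -/

instance (k : ℕ) : Module.Finite K (homogeneousSubmodule (Fin 2) K k) := by
  have hle : homogeneousSubmodule (Fin 2) K k ≤ restrictTotalDegree (Fin 2) K k := by
    intro p hp
    rw [mem_restrictTotalDegree]
    exact ((mem_homogeneousSubmodule _ _).1 hp).totalDegree_le
  exact Submodule.finiteDimensional_of_le hle

noncomputable local instance fastACG (k : ℕ) :
    AddCommGroup (homogeneousSubmodule (Fin 2) K k) := inferInstance

noncomputable local instance fastMod (k : ℕ) :
    Module K (homogeneousSubmodule (Fin 2) K k) := inferInstance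

local instance fastFree (k : ℕ) :
    Module.Free K (homogeneousSubmodule (Fin 2) K k) := inferInstance

lemma Phi_comp_sig (m : ℕ) : Phi (K := K) m ∘ₗ sig m = LinearMap.id := by
  refine LinearMap.ext fun x => ?_
  apply Subtype.ext
  have hx : (x : MvPolynomial (Fin 2) K).IsHomogeneous (m + 1) := x.2
  simp only [Phi, sig, LinearMap.comp_apply, LinearMap.coprod_apply, LinearMap.prod_apply,
    Pi.prod, LinearMap.sub_apply, LinearMap.id_apply, Submodule.coe_add, coe_mb, coe_db,
    Submodule.coe_sub]
  exact key1 hx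

lemma rho_comp_iot (k : ℕ) : rho (K := K) k ∘ₗ iot k = LinearMap.id := by
  refine LinearMap.ext fun r => ?_
  apply Subtype.ext
  simp only [rho, iot, Phi, LinearMap.comp_apply, LinearMap.coprod_apply, LinearMap.prod_apply,
    Function.prod, LinearMap.sub_apply, LinearMap.fst_apply, LinearMap.id_apply, LinearMap.neg_apply,
    Submodule.coe_add, coe_mb, coe_db, Submodule.coe_sub, Submodule.coe_neg]
  have h0 : X 0 * (X 1 * (r : MvPolynomial (Fin 2) K)) +
      X 1 * (-(X 0 * (r : MvPolynomial (Fin 2) K))) = 0 := by ring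
  rw [h0, map_zero, sub_zero, dv_X_mul]

lemma sig_phi_add_iot_rho (k : ℕ) :
    sig (k + 1) ∘ₗ Phi (k + 1) + iot k ∘ₗ rho k =
      (LinearMap.id : _ →ₗ[K] homogeneousSubmodule (Fin 2) K (k + 1) ×
        homogeneousSubmodule (Fin 2) K (k + 1)) := by
  refine LinearMap.ext fun x => ?_
  obtain ⟨p, q⟩ := x
  have e0 : dv 0 (X 0 * (p : MvPolynomial (Fin 2) K) + X 1 * (q : MvPolynomial (Fin 2) K)) =
      (p : MvPolynomial (Fin 2) K) + X 1 * dv 0 (q : MvPolynomial (Fin 2) K) := by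
    rw [map_add, dv_X_mul, dv_X_mul_ne (by decide)]
  have e1 : dv 1 ((p : MvPolynomial (Fin 2) K) -
      dv 0 (X 0 * (p : MvPolynomial (Fin 2) K) + X 1 * (q : MvPolynomial (Fin 2) K))) =
      -dv 0 (q : MvPolynomial (Fin 2) K) := by
    rw [e0]
    have h0 : (p : MvPolynomial (Fin 2) K) -
        ((p : MvPolynomial (Fin 2) K) + X 1 * dv 0 (q : MvPolynomial (Fin 2) K)) =
        X 1 * (-(dv 0 (q : MvPolynomial (Fin 2) K))) := by ring
    rw [h0, dv_X_mul]
  apply Prod.ext <;> apply Subtype.ext <;>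
    simp only [sig, Phi, iot, rho, LinearMap.add_apply, LinearMap.comp_apply,
      LinearMap.coprod_apply, LinearMap.prod_apply, Function.prod, LinearMap.sub_apply,
      LinearMap.fst_apply, LinearMap.id_apply, LinearMap.neg_apply, Prod.fst_add, Prod.snd_add,
      Submodule.coe_add, coe_mb, coe_db, Submodule.coe_sub, Submodule.coe_neg]
  · rw [e1, e0]
    ring
  · rw [e1, e0]
    have h0 : (X 0 * (p : MvPolynomial (Fin 2) K) + X 1 * (q : MvPolynomial (Fin 2) K)) -
        X 0 * ((p : MvPolynomial (Fin 2) K) + X 1 * dv 0 (q : MvPolynomial (Fin 2) K)) =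
        X 1 * ((q : MvPolynomial (Fin 2) K) -
          X 0 * dv 0 (q : MvPolynomial (Fin 2) K)) := by ring
    rw [h0, dv_X_mul]
    ring

lemma sig_comp_phi_zero : sig (K := K) 0 ∘ₗ Phi 0 = LinearMap.id := by
  refine LinearMap.ext fun x => ?_
  obtain ⟨p, q⟩ := x
  have hq0 : dv 0 (q : MvPolynomial (Fin 2) K) = 0 :=
    dv_eq_zero_of_isHomogeneous_zero 0 q.2
  have e0 : dv 0 (X 0 * (p : MvPolynomial (Fin 2) K) + X 1 * (q : MvPolynomial (Fin 2) K)) =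
      (p : MvPolynomial (Fin 2) K) := by
    rw [map_add, dv_X_mul, dv_X_mul_ne (by decide), hq0, mul_zero, add_zero]
  apply Prod.ext <;> apply Subtype.ext <;>
    simp only [sig, Phi, LinearMap.comp_apply, LinearMap.coprod_apply, LinearMap.prod_apply,
      Function.prod, LinearMap.sub_apply, LinearMap.id_apply, Submodule.coe_add, coe_mb, coe_db,
      Submodule.coe_sub]
  · exact e0
  · rw [e0]
    have h0 : (X 0 * (p : MvPolynomial (Fin 2) K) + X 1 * (q : MvPolynomial (Fin 2) K)) -
        X 0 * (p : MvPolynomial (Fin 2) K) = X 1 * (q : MvPolynomial (Fin 2) K) := by ring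
    rw [h0, dv_X_mul]

lemma phi_comp_TT (m : ℕ) : Phi m ∘ₗ TT A m = symPowMap A (m + 1) ∘ₗ Phi m := by
  refine LinearMap.ext fun x => ?_
  obtain ⟨p, q⟩ := x
  apply Subtype.ext
  simp only [Phi, TT, LinearMap.add_apply, LinearMap.comp_apply, LinearMap.coprod_apply,
    LinearMap.prodMap_apply, LinearMap.inl_apply, LinearMap.inr_apply, LinearMap.fst_apply,
    LinearMap.snd_apply, LinearMap.smul_apply, Prod.fst_add, Prod.snd_add, Prod.fst_neg,
    Prod.snd_neg, Submodule.coe_add, Submodule.coe_smul, Submodule.coe_neg, coe_mb,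
    coe_symPowMap, Submodule.coe_zero, map_add, map_mul, map_neg, aeval_X, add_zero, zero_add]
  set Pp := aeval ((fun i => ∑ j, A i j • X j) : Fin 2 → MvPolynomial (Fin 2) K) ((p : MvPolynomial (Fin 2) K)) with hPp
  set Qq := aeval ((fun i => ∑ j, A i j • X j) : Fin 2 → MvPolynomial (Fin 2) K) ((q : MvPolynomial (Fin 2) K)) with hQq
  simp only [Fin.sum_univ_two, smul_eq_C_mul, map_sub, map_mul]
  ring

lemma TT_comp_iot (k : ℕ) :
    TT A (k + 1) ∘ₗ iot k =
      iot k ∘ₗ ((A 0 0 * A 1 1 - A 0 1 * A 1 0) • symPowMap A k) := by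
  refine LinearMap.ext fun r => ?_
  apply Prod.ext <;> apply Subtype.ext <;>
    simp only [TT, iot, LinearMap.add_apply, LinearMap.comp_apply, LinearMap.prod_apply,
      Function.prod, LinearMap.prodMap_apply, LinearMap.inl_apply, LinearMap.inr_apply,
      LinearMap.fst_apply, LinearMap.snd_apply, LinearMap.smul_apply, LinearMap.neg_apply,
      Prod.fst_add, Prod.snd_add, Prod.fst_neg, Prod.snd_neg, Submodule.coe_add,
      Submodule.coe_smul, Submodule.coe_neg, Submodule.coe_zero, coe_mb, coe_symPowMap,
      map_add, map_mul, map_neg, aeval_X, add_zero, zero_add, neg_zero, mul_neg, neg_neg] <;>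
  · set Rr := aeval ((fun i => ∑ j, A i j • X j) : Fin 2 → MvPolynomial (Fin 2) K) ((r : MvPolynomial (Fin 2) K)) with hRr
    simp only [Fin.sum_univ_two, smul_eq_C_mul, map_sub, map_mul]
    ring

/-! ### Abstract trace lemmas -/

section Abstract

variable {V W U : Type*} [AddCommGroup V] [Module K V] [AddCommGroup W] [Module K W]
  [AddCommGroup U] [Module K U] [Module.Finite K V] [Module.Finite K W] [Module.Finite K U]

lemma trace_split (Φ : W →ₗ[K] V) (σ' : V →ₗ[K] W) (ι : U →ₗ[K] W) (ρ : W →ₗ[K] U)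
    (T : W →ₗ[K] W) (S : V →ₗ[K] V) (R : U →ₗ[K] U)
    (h1 : Φ ∘ₗ σ' = LinearMap.id) (h2 : ρ ∘ₗ ι = LinearMap.id)
    (h3 : σ' ∘ₗ Φ + ι ∘ₗ ρ = LinearMap.id)
    (h4 : Φ ∘ₗ T = S ∘ₗ Φ) (h5 : T ∘ₗ ι = ι ∘ₗ R) :
    LinearMap.trace K W T = LinearMap.trace K V S + LinearMap.trace K U R := by
  have hT : T = (T ∘ₗ σ') ∘ₗ Φ + (T ∘ₗ ι) ∘ₗ ρ := by
    rw [LinearMap.comp_assoc, LinearMap.comp_assoc, ← LinearMap.comp_add, h3,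
      LinearMap.comp_id]
  conv_lhs => rw [hT]
  rw [map_add, LinearMap.trace_comp_comm' Φ (T ∘ₗ σ'), LinearMap.trace_comp_comm' ρ (T ∘ₗ ι),
    ← LinearMap.comp_assoc, h4, LinearMap.comp_assoc, h1, LinearMap.comp_id]
  congr 1
  rw [h5, ← LinearMap.comp_assoc, h2, LinearMap.id_comp]

lemma trace_iso (Φ : W →ₗ[K] V) (σ' : V →ₗ[K] W) (T : W →ₗ[K] W) (S : V →ₗ[K] V)
    (h1 : Φ ∘ₗ σ' = LinearMap.id) (h3 : σ' ∘ₗ Φ = LinearMap.id) (h4 : Φ ∘ₗ T = S ∘ₗ Φ) :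
    LinearMap.trace K W T = LinearMap.trace K V S := by
  have hT : T = (T ∘ₗ σ') ∘ₗ Φ := by
    rw [LinearMap.comp_assoc, h3, LinearMap.comp_id]
  rw [hT, LinearMap.trace_comp_comm' Φ (T ∘ₗ σ'), ← LinearMap.comp_assoc, h4,
    LinearMap.comp_assoc, h1, LinearMap.comp_id]

end Abstract

/-! ### Trace computations -/

lemma trace_TT (m : ℕ) :
    LinearMap.trace K _ (TT A m) = (A 0 0 + A 1 1) * trSymPow A m := by
  have hz1 : LinearMap.trace K _
      (LinearMap.inl K _ _ ∘ₗ (A 1 0 • symPowMap A m) ∘ₗ LinearMap.snd K _ _) = 0 := by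
    rw [LinearMap.trace_comp_comm', LinearMap.comp_assoc, LinearMap.snd_comp_inl,
      LinearMap.comp_zero, map_zero]
  have hz2 : LinearMap.trace K _
      (LinearMap.inr K _ _ ∘ₗ (A 0 1 • symPowMap A m) ∘ₗ LinearMap.fst K _ _) = 0 := by
    rw [LinearMap.trace_comp_comm', LinearMap.comp_assoc, LinearMap.fst_comp_inr,
      LinearMap.comp_zero, map_zero]
  rw [TT, map_add, map_add, LinearMap.trace_prodMap', map_smul, map_smul, hz1, hz2]
  simp only [trSymPow, smul_eq_mul]
  ring

lemma eq_C_of_isHomogeneous_zero {p : MvPolynomial (Fin 2) K} (hp : p.IsHomogeneous 0) :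
    p = C (coeff 0 p) := by
  apply MvPolynomial.ext
  intro d
  rcases eq_or_ne d 0 with rfl | h
  · simp
  · rw [hp.coeff_eq_zero (by rwa [ne_eq, Finsupp.degree_eq_zero_iff]), coeff_C,
      if_neg (Ne.symm h)]

lemma symPowMap_zero_eq_id : symPowMap A 0 = LinearMap.id := by
  refine LinearMap.ext fun x => ?_
  apply Subtype.ext
  have hx : (x : MvPolynomial (Fin 2) K).IsHomogeneous 0 := x.2
  rw [coe_symPowMap, LinearMap.id_apply]
  conv_lhs => rw [eq_C_of_isHomogeneous_zero hx]
  conv_rhs => rw [eq_C_of_isHomogeneous_zero hx]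
  rw [aeval_C, algebraMap_eq]

/-- The degree-zero component is one-dimensional. -/
noncomputable def e0 : (homogeneousSubmodule (Fin 2) K 0) ≃ₗ[K] K where
  toFun x := coeff 0 (x : MvPolynomial (Fin 2) K)
  map_add' x y := by simp
  map_smul' c x := by simp
  invFun c := ⟨C c, isHomogeneous_C _ _⟩
  left_inv x := by
    apply Subtype.ext
    exact (eq_C_of_isHomogeneous_zero x.2).symm
  right_inv c := by simp

lemma trSymPow_zero : trSymPow A 0 = 1 := by
  rw [trSymPow, symPowMap_zero_eq_id, LinearMap.trace_id]
  have h : Module.finrank K (homogeneousSubmodule (Fin 2) K 0) = 1 := by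
    rw [(e0 (K := K)).finrank_eq, Module.finrank_self]
  rw [h, Nat.cast_one]

lemma trSymPow_one : trSymPow A 1 = A 0 0 + A 1 1 := by
  have h := trace_iso (Phi 0) (sig 0) (TT A 0) (symPowMap A 1) (Phi_comp_sig 0)
    sig_comp_phi_zero (phi_comp_TT A 0)
  rw [trace_TT, trSymPow_zero, mul_one] at h
  rw [trSymPow, ← h]

lemma trSymPow_rec (k : ℕ) :
    trSymPow A (k + 2) = (A 0 0 + A 1 1) * trSymPow A (k + 1)
      - (A 0 0 * A 1 1 - A 0 1 * A 1 0) * trSymPow A k := by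
  have h := trace_split (Phi (k + 1)) (sig (k + 1)) (iot k) (rho k) (TT A (k + 1))
    (symPowMap A (k + 2)) ((A 0 0 * A 1 1 - A 0 1 * A 1 0) • symPowMap A k)
    (Phi_comp_sig (k + 1)) (rho_comp_iot k) (sig_phi_add_iot_rho k)
    (phi_comp_TT A (k + 1)) (TT_comp_iot A k)
  rw [trace_TT, map_smul, smul_eq_mul] at h
  have e : (LinearMap.trace K ↥(homogeneousSubmodule (Fin 2) K (k + 1 + 1)))
        (symPowMap A (k + 2)) =
      (LinearMap.trace K ↥(homogeneousSubmodule (Fin 2) K (k + 2))) (symPowMap A (k + 2)) := rfl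
  rw [e] at h
  simp only [trSymPow] at h ⊢
  linear_combination -h

end SymPowAux

theorem entry_pow_div_eq_sym_trace
    (K : Type*) [Field K] (A : Matrix (Fin 2) (Fin 2) K) (hb : A 0 1 ≠ 0) :
    ∀ k : ℕ, (A ^ (k + 1)) 0 1 / A 0 1 = trSymPow A k := by
  have CH : A * A = (A 0 0 + A 1 1) • A
      - (A 0 0 * A 1 1 - A 0 1 * A 1 0) • (1 : Matrix (Fin 2) (Fin 2) K) := by
    ext i j
    fin_cases i <;> fin_cases j <;>
      simp [Matrix.mul_apply, Fin.sum_univ_two, Matrix.one_apply] <;> ring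
  have key : ∀ k : ℕ, (A ^ (k + 1)) 0 1 = A 0 1 * trSymPow A k := by
    intro k
    induction k using Nat.twoStepInduction with
    | zero => rw [pow_one, SymPowAux.trSymPow_zero, mul_one]
    | one =>
      rw [pow_two, CH, SymPowAux.trSymPow_one, Matrix.sub_apply, Matrix.smul_apply,
        Matrix.smul_apply, Matrix.one_apply_ne (by decide : (0 : Fin 2) ≠ 1), smul_eq_mul,
        smul_zero]
      ring
    | more n ih1 ih2 =>
      have hp : A ^ (n + 3) = A ^ (n + 1) * (A * A) := by
        rw [pow_succ, pow_succ, mul_assoc]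
      have ih2' : (A ^ (n + 2)) 0 1 = A 0 1 * trSymPow A (n + 1) := ih2
      rw [show n + 2 + 1 = n + 3 from rfl, hp, CH, mul_sub, mul_smul_comm, mul_smul_comm,
        mul_one, ← pow_succ, Matrix.sub_apply, Matrix.smul_apply, Matrix.smul_apply,
        show n + 1 + 1 = n + 2 from rfl, ih2', ih1, SymPowAux.trSymPow_rec A n,
        smul_eq_mul, smul_eq_mul]
      ring
  intro k
  rw [key k, mul_div_cancel_left₀ _ hb]
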